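/- arXiv:1212.3983 — 3 statements merged into one kernel-verified Lean document; each statement's English description precedes it below -/
import Mathlib

section
/- Let A and B be finite sets of chords of a circle such that every chord of A has exactly one endpoint on an arc (X,Y), every chord of B has both endpoints on (X,Y), every triangle in the intersection graph of A ∪ B contains at most one chord of B, and every chord of B crosses some chord of A. For each chord b of B, associate the interval [P_b, Q_b] on the real line, where P_b + 1 and Q_b are the minimal and maximal indices (in the arc order along (X,Y)) of chords of A crossing b. Then no two such intervals properly cross, i.e., there are no chords b, b' with P_b < P_{b'} < Q_b < Q_{b'}. -/
/-- A chord of the circle, given by its two endpoints in a fixed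
parametrization of the circle by real numbers. -/
structure Chord where
  l : ℝ
  r : ℝ
  lt : l < r

noncomputable instance : DecidableEq Chord := Classical.decEq _

/-- Two chords cross iff their endpoints interleave. -/
def Chord.Crosses (c d : Chord) : Prop :=
  (c.l < d.l ∧ d.l < c.r ∧ c.r < d.r) ∨ (d.l < c.l ∧ c.l < d.r ∧ d.r < c.r)

/-- with the chords of `A` enumerated `a 0, …, a (n-1)` in arc
order of their unique endpoints `e i` on the arc `(x, y)`, the intervals
`[P b, Q b]` associated to the chords of `B` never properly cross. -/
theorem stmt0 (n : ℕ) (x y : ℝ) (hxy : x < y)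
    (a : Fin n → Chord) (e : Fin n → ℝ) (he : StrictMono e)
    (heIoo : ∀ i, e i ∈ Set.Ioo x y)
    -- each chord of A has exactly one endpoint on the arc, namely e i
    (hae : ∀ i, ((a i).l = e i ∧ (a i).r ∉ Set.Ioo x y) ∨
                ((a i).r = e i ∧ (a i).l ∉ Set.Ioo x y))
    (B : Finset Chord)
    -- each chord of B has both endpoints on the arc
    (hB : ∀ b ∈ B, b.l ∈ Set.Ioo x y ∧ b.r ∈ Set.Ioo x y)
    -- each triangle of G(A ∪ B) contains at most one chord of B
    (htri : ∀ c d g : Chord,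
      c ∈ Finset.univ.image a ∪ B → d ∈ Finset.univ.image a ∪ B →
      g ∈ Finset.univ.image a ∪ B →
      c.Crosses d → c.Crosses g → d.Crosses g →
      ¬(c ∈ B ∧ d ∈ B) ∧ ¬(c ∈ B ∧ g ∈ B) ∧ ¬(d ∈ B ∧ g ∈ B))
    -- each chord of B crosses some chord of A
    (hcross : ∀ b ∈ B, ∃ i, (a i).Crosses b)
    (P Q : Chord → ℕ)
    -- P b + 1 is the minimal index of a chord of A crossing b
    (hP : ∀ b ∈ B, IsLeast {i : ℕ | ∃ h : i < n, (a ⟨i, h⟩).Crosses b} (P b + 1))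
    -- Q b is the maximal index of a chord of A crossing b
    (hQ : ∀ b ∈ B, IsGreatest {i : ℕ | ∃ h : i < n, (a ⟨i, h⟩).Crosses b} (Q b)) :
    ¬ ∃ b ∈ B, ∃ b' ∈ B, P b < P b' ∧ P b' < Q b ∧ Q b < Q b' := by
  rintro ⟨b, hb, b', hb', h1, h2, h3⟩
  -- key: a chord of A crosses a chord of B iff its arc endpoint lies strictly inside
  have key : ∀ (i : Fin n) (c : Chord), c ∈ B →
      ((a i).Crosses c ↔ c.l < e i ∧ e i < c.r) := by
    intro i c hc
    obtain ⟨⟨hcl1, hcl2⟩, ⟨hcr1, hcr2⟩⟩ := hB c hc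
    obtain ⟨hei1, hei2⟩ := heIoo i
    have hlt := (a i).lt
    have hclt := c.lt
    rcases hae i with ⟨h1', h2'⟩ | ⟨h1', h2'⟩
    · have hr : y ≤ (a i).r := by
        by_contra h
        push_neg at h
        exact h2' ⟨by linarith, h⟩
      constructor
      · rintro (⟨u, v, w⟩ | ⟨u, v, w⟩) <;> constructor <;> linarith
      · rintro ⟨u, v⟩
        right
        exact ⟨by linarith, by linarith, by linarith⟩
    · have hl : (a i).l ≤ x := by
        by_contra h
        push_neg at h
        exact h2' ⟨h, by linarith⟩
      constructor
      · rintro (⟨u, v, w⟩ | ⟨u, v, w⟩) <;> constructor <;> linarith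
      · rintro ⟨u, v⟩
        left
        exact ⟨by linarith, by linarith, by linarith⟩
  obtain ⟨⟨hi₁, hci₁⟩, hPb⟩ := hP b hb
  obtain ⟨⟨hi₂, hci₂⟩, hQb⟩ := hQ b hb
  obtain ⟨⟨hj₁, hcj₁⟩, hPb'⟩ := hP b' hb'
  obtain ⟨⟨hj₂, hcj₂⟩, hQb'⟩ := hQ b' hb'
  have hmono : ∀ (u v : ℕ) (hu : u < n) (hv : v < n), u ≤ v →
      e ⟨u, hu⟩ ≤ e ⟨v, hv⟩ := fun u v hu hv huv => he.monotone (Fin.mk_le_mk.mpr huv)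
  have eb1 := (key _ b hb).1 hci₁
  have eb2 := (key _ b hb).1 hci₂
  have eb'1 := (key _ b' hb').1 hcj₁
  have eb'2 := (key _ b' hb').1 hcj₂
  have hk : P b' < n := h2.trans hi₂
  have hm : Q b + 1 < n := by omega
  -- the chord at index P b' does not cross b', so its endpoint is ≤ b'.l
  have ek1 : b.l < e ⟨P b', hk⟩ := lt_of_lt_of_le eb1.1 (hmono _ _ _ _ (by omega))
  have eklt : e ⟨P b', hk⟩ < b'.r :=
    lt_of_le_of_lt (hmono _ _ hk hj₁ (by omega)) eb'1.2
  have hknc : ¬ (a ⟨P b', hk⟩).Crosses b' := by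
    intro hc
    have := hPb' ⟨hk, hc⟩
    omega
  have hkb' : e ⟨P b', hk⟩ ≤ b'.l := by
    by_contra h
    push_neg at h
    exact hknc ((key _ b' hb').2 ⟨h, eklt⟩)
  -- the chord at index Q b + 1 does not cross b, so its endpoint is ≥ b.r
  have em2 : e ⟨Q b + 1, hm⟩ < b'.r :=
    lt_of_le_of_lt (hmono _ _ hm hj₂ (by omega)) eb'2.2
  have emgt : b.l < e ⟨Q b + 1, hm⟩ :=
    lt_of_lt_of_le eb2.1 (hmono _ _ hi₂ hm (by omega))
  have hmnc : ¬ (a ⟨Q b + 1, hm⟩).Crosses b := by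
    intro hc
    have := hQb ⟨hm, hc⟩
    omega
  have hmb : b.r ≤ e ⟨Q b + 1, hm⟩ := by
    by_contra h
    push_neg at h
    exact hmnc ((key _ b hb).2 ⟨emgt, h⟩)
  -- b crosses b'
  have hbb' : b.Crosses b' :=
    Or.inl ⟨lt_of_lt_of_le ek1 hkb',
      lt_trans (lt_of_lt_of_le eb'1.1 (hmono _ _ hj₁ hi₂ (by omega))) eb2.2,
      lt_of_le_of_lt hmb em2⟩
  -- a ⟨P b' + 1⟩ crosses b as well
  have haj₁b : (a ⟨P b' + 1, hj₁⟩).Crosses b := (key _ b hb).2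
    ⟨lt_of_lt_of_le eb1.1 (hmono _ _ hi₁ hj₁ (by omega)),
     lt_of_le_of_lt (hmono _ _ hj₁ hi₂ (by omega)) eb2.2⟩
  have := htri (a ⟨P b' + 1, hj₁⟩) b b'
    (Finset.mem_union_left _ (Finset.mem_image_of_mem a (Finset.mem_univ _)))
    (Finset.mem_union_right _ hb) (Finset.mem_union_right _ hb')
    haj₁b hcj₁ hbb'
  exact this.2.2 ⟨hb, hb'⟩
end

section
/- Let I be a finite family of closed intervals [p,q] with integer endpoints and p < q, such that no two intervals properly cross (i.e., there are no intervals [p1,q1], [p2,q2] in I with p1 < p2 < q1 < q2). Define two distinct intervals to be touching if the right endpoint of one equals the left endpoint of the other. Then the graph on I with touching as adjacency is properly 3-colorable. -/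
theorem sigma3 : ∀ x y c d : Fin 3, c ≠ d → ∃ σ : Fin 3 → Fin 3,
    Function.Injective σ ∧ σ x = c ∧ σ y ≠ d := by decide

theorem addone3 : ∀ z : Fin 3, z ≠ z + 1 := by decide

theorem key (n : ℕ) : ∀ I : Finset (ℤ × ℤ),
    I.card ≤ n →
    (∀ p ∈ I, p.1 < p.2) →
    (∀ p ∈ I, ∀ q ∈ I, ¬(p.1 < q.1 ∧ q.1 < p.2 ∧ p.2 < q.2)) →
    ∀ a b : ℤ, a < b → (∀ p ∈ I, a ≤ p.1 ∧ p.2 ≤ b) →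
    ∃ g : ℤ → Fin 3, (∀ p ∈ I, g p.1 ≠ g p.2) ∧ g a ≠ g b := by
  induction n with
  | zero =>
    intro I hcard _ _ a b hab _
    have hI : I = ∅ := Finset.card_eq_zero.mp (Nat.le_zero.mp hcard)
    subst hI
    refine ⟨fun x => if x = a then 0 else 1, by simp, ?_⟩
    simp only [if_pos rfl, if_neg hab.ne']
    decide
  | succ n ih =>
    intro I hcard hlt hnc a b hab hbound
    rcases I.eq_empty_or_nonempty with rfl | hne
    · refine ⟨fun x => if x = a then 0 else 1, by simp, ?_⟩
      simp only [if_pos rfl, if_neg hab.ne']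
      decide
    by_cases hmem : (a, b) ∈ I
    · obtain ⟨g, hg, hgab⟩ := ih (I.erase (a, b))
        (by have := Finset.card_erase_of_mem hmem; omega)
        (fun p hp => hlt p (Finset.mem_of_mem_erase hp))
        (fun p hp q hq => hnc p (Finset.mem_of_mem_erase hp) q (Finset.mem_of_mem_erase hq))
        a b hab (fun p hp => hbound p (Finset.mem_of_mem_erase hp))
      refine ⟨g, ?_, hgab⟩
      intro p hp
      by_cases hpe : p = (a, b)
      · subst hpe; exact hgab
      · exact hg p (Finset.mem_erase.mpr ⟨hpe, hp⟩)
    · have hFne : (I.image Prod.fst).Nonempty := hne.image _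
      set m := (I.image Prod.fst).min' hFne with hm_def
      have hm_min : ∀ p ∈ I, m ≤ p.1 := fun p hp =>
        Finset.min'_le _ _ (Finset.mem_image_of_mem _ hp)
      obtain ⟨p₀, hp₀, hp₀1⟩ := Finset.mem_image.mp ((I.image Prod.fst).min'_mem hFne)
      have hNne : ((I.filter (fun p => p.1 = m)).image Prod.snd).Nonempty :=
        ⟨p₀.2, Finset.mem_image_of_mem _ (Finset.mem_filter.mpr ⟨hp₀, hp₀1⟩)⟩
      set Q := ((I.filter (fun p => p.1 = m)).image Prod.snd).max' hNne with hQ_def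
      have hQmem : (m, Q) ∈ I := by
        obtain ⟨p, hp, hp2⟩ := Finset.mem_image.mp
          (Finset.max'_mem _ hNne)
        obtain ⟨hpI, hp1⟩ := Finset.mem_filter.mp hp
        have hpe : p = (m, Q) := Prod.ext hp1 hp2
        rwa [← hpe]
      have hQmax : ∀ p ∈ I, p.1 = m → p.2 ≤ Q := fun p hp h1 =>
        Finset.le_max' _ _ (Finset.mem_image_of_mem _ (Finset.mem_filter.mpr ⟨hp, h1⟩))
      have hmQ : m < Q := hlt (m, Q) hQmem
      have haM : a ≤ m := (hbound _ hQmem).1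
      have hMne : (I.image Prod.snd).Nonempty := hne.image _
      set M := (I.image Prod.snd).max' hMne with hM_def
      have hMmax : ∀ p ∈ I, p.2 ≤ M := fun p hp =>
        Finset.le_max' _ _ (Finset.mem_image_of_mem _ hp)
      obtain ⟨pM, hpM, hpM2⟩ := Finset.mem_image.mp ((I.image Prod.snd).max'_mem hMne)
      have hMb : M ≤ b := by rw [hM_def, ← hpM2]; exact (hbound _ hpM).2
      by_cases hQM : Q < M
      · -- split at Q
        have hRmemM : pM ∈ I.filter (fun p => Q < p.2) :=
          Finset.mem_filter.mpr ⟨hpM, by rw [hpM2]; exact hQM⟩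
        have hLcard : (I.filter (fun p => p.2 ≤ Q)).card ≤ n := by
          have hss : I.filter (fun p => p.2 ≤ Q) ⊂ I :=
            (Finset.ssubset_iff_of_subset (Finset.filter_subset _ _)).2
              ⟨pM, hpM, by
                intro hmemL
                have := (Finset.mem_filter.mp hmemL).2
                rw [hpM2] at this
                exact absurd this (not_le.mpr hQM)⟩
          have := Finset.card_lt_card hss; omega
        have hRcard : (I.filter (fun p => Q < p.2)).card ≤ n := by
          have hss : I.filter (fun p => Q < p.2) ⊂ I :=
            (Finset.ssubset_iff_of_subset (Finset.filter_subset _ _)).2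
              ⟨(m, Q), hQmem, by
                intro hmemR
                have := (Finset.mem_filter.mp hmemR).2
                exact absurd this (lt_irrefl Q)⟩
          have := Finset.card_lt_card hss; omega
        have hF1 : ∀ p ∈ I.filter (fun p => Q < p.2), Q ≤ p.1 := by
          intro p hp
          obtain ⟨hpI, hpQ⟩ := Finset.mem_filter.mp hp
          rcases eq_or_lt_of_le (hm_min p hpI) with h1 | h1
          · exact absurd (hQmax p hpI h1.symm) (not_le.mpr hpQ)
          · by_contra hlt'
            exact hnc _ hQmem _ hpI ⟨h1, lt_of_not_ge hlt', hpQ⟩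
        obtain ⟨gL, hgL, hgLab⟩ := ih (I.filter (fun p => p.2 ≤ Q)) hLcard
          (fun p hp => hlt p (Finset.filter_subset _ _ hp))
          (fun p hp q hq => hnc p (Finset.filter_subset _ _ hp) q (Finset.filter_subset _ _ hq))
          a Q (lt_of_le_of_lt haM hmQ)
          (fun p hp => ⟨(hbound p (Finset.filter_subset _ _ hp)).1, (Finset.mem_filter.mp hp).2⟩)
        obtain ⟨gR, hgR, _⟩ := ih (I.filter (fun p => Q < p.2)) hRcard
          (fun p hp => hlt p (Finset.filter_subset _ _ hp))
          (fun p hp q hq => hnc p (Finset.filter_subset _ _ hp) q (Finset.filter_subset _ _ hq))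
          Q b (lt_of_lt_of_le hQM hMb)
          (fun p hp => ⟨hF1 p hp, (hbound p (Finset.filter_subset _ _ hp)).2⟩)
        obtain ⟨σ, hσinj, hσ1, hσ2⟩ := sigma3 (gR Q) (gR b) (gL Q) (gL a) (Ne.symm hgLab)
        refine ⟨fun x => if x ≤ Q then gL x else σ (gR x), ?_, ?_⟩
        · intro p hpI
          rcases le_or_gt p.2 Q with h2 | h2
          · have hpL : p ∈ I.filter (fun p => p.2 ≤ Q) := Finset.mem_filter.mpr ⟨hpI, h2⟩
            have h1 : p.1 ≤ Q := le_of_lt (lt_of_lt_of_le (hlt p hpI) h2)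
            simp only [if_pos h1, if_pos h2]
            exact hgL p hpL
          · have hpR : p ∈ I.filter (fun p => Q < p.2) := Finset.mem_filter.mpr ⟨hpI, h2⟩
            have h1 : Q ≤ p.1 := hF1 p hpR
            have h2' : ¬ p.2 ≤ Q := not_le.mpr h2
            rcases eq_or_lt_of_le h1 with he | hgt
            · simp only [if_pos (le_of_eq he.symm), if_neg h2']
              intro hEq
              apply hgR p hpR
              apply hσinj
              rw [← he, hσ1]
              rw [← he] at hEq
              exact hEq
            · simp only [if_neg (not_le.mpr hgt), if_neg h2']
              exact fun hEq => hgR p hpR (hσinj hEq)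
        · have hb' : ¬ b ≤ Q := not_le.mpr (lt_of_lt_of_le hQM hMb)
          have ha' : a ≤ Q := le_of_lt (lt_of_le_of_lt haM hmQ)
          simp only [if_pos ha', if_neg hb']
          exact fun h => hσ2 h.symm
      · -- spanning case : Q = M
        have hQM' : Q = M := le_antisymm (hMmax _ hQmem) (not_lt.mp hQM)
        obtain ⟨g₀, hg₀, h₀⟩ := ih (I.erase (m, Q))
          (by have := Finset.card_erase_of_mem hQmem; omega)
          (fun p hp => hlt p (Finset.mem_of_mem_erase hp))
          (fun p hp q hq => hnc p (Finset.mem_of_mem_erase hp) q (Finset.mem_of_mem_erase hq))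
          m Q hmQ
          (fun p hp => ⟨hm_min p (Finset.mem_of_mem_erase hp),
            hQM' ▸ hMmax p (Finset.mem_of_mem_erase hp)⟩)
        have hproper : ∀ p ∈ I, g₀ p.1 ≠ g₀ p.2 := by
          intro p hp
          by_cases hpe : p = (m, Q)
          · subst hpe; exact h₀
          · exact hg₀ p (Finset.mem_erase.mpr ⟨hpe, hp⟩)
        have hQb : Q ≤ b := hQM' ▸ hMb
        have hub : ∀ p ∈ I, p.2 ≤ Q := fun p hp => hQM' ▸ hMmax p hp
        by_cases haeq : a = m
        · have hbne : b ≠ Q := fun h => hmem (by rw [haeq, h]; exact hQmem)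
          have hQb' : Q < b := lt_of_le_of_ne hQb (Ne.symm hbne)
          refine ⟨fun x => if x = b then g₀ m + 1 else g₀ x, ?_, ?_⟩
          · intro p hp
            have h2 : p.2 ≠ b := ne_of_lt (lt_of_le_of_lt (hub p hp) hQb')
            have h1 : p.1 ≠ b := ne_of_lt (lt_trans (hlt p hp) (lt_of_le_of_lt (hub p hp) hQb'))
            simp only [if_neg h1, if_neg h2]
            exact hproper p hp
          · show (if a = b then g₀ m + 1 else g₀ a) ≠ (if b = b then g₀ m + 1 else g₀ b)
            rw [if_neg hab.ne, if_pos rfl, haeq]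
            exact addone3 (g₀ m)
        · have ham' : a < m := lt_of_le_of_ne haM haeq
          have hane : ∀ p ∈ I, p.1 ≠ a ∧ p.2 ≠ a := by
            intro p hp
            have ha1 : a < p.1 := lt_of_lt_of_le ham' (hm_min p hp)
            have ha2 : a < p.2 := lt_trans ha1 (hlt p hp)
            exact ⟨ha1.ne', ha2.ne'⟩
          by_cases hbeq : b = Q
          · refine ⟨fun x => if x = a then g₀ Q + 1 else g₀ x, ?_, ?_⟩
            · intro p hp
              simp only [if_neg (hane p hp).1, if_neg (hane p hp).2]
              exact hproper p hp
            · show (if a = a then g₀ Q + 1 else g₀ a) ≠ (if b = a then g₀ Q + 1 else g₀ b)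
              rw [if_pos rfl, if_neg hab.ne', hbeq]
              exact (addone3 (g₀ Q)).symm
          · have hQb' : Q < b := lt_of_le_of_ne hQb (Ne.symm hbeq)
            refine ⟨fun x => if x = a then 0 else if x = b then 1 else g₀ x, ?_, ?_⟩
            · intro p hp
              have h2b : p.2 ≠ b := ne_of_lt (lt_of_le_of_lt (hub p hp) hQb')
              have h1b : p.1 ≠ b := ne_of_lt (lt_trans (hlt p hp) (lt_of_le_of_lt (hub p hp) hQb'))
              simp only [if_neg (hane p hp).1, if_neg (hane p hp).2, if_neg h1b, if_neg h2b]
              exact hproper p hp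
            · show (if a = a then (0 : Fin 3) else if a = b then 1 else g₀ a) ≠
                (if b = a then 0 else if b = b then 1 else g₀ b)
              rw [if_pos rfl, if_neg hab.ne', if_pos rfl]
              decide

/-- a finite family of pairwise non-crossing closed integer
intervals can be properly 3-colored with respect to the "touching" relation
(right endpoint of one equals left endpoint of the other). -/
theorem stmt1 (I : Finset (ℤ × ℤ))
    (hlt : ∀ p ∈ I, p.1 < p.2)
    -- no two intervals properly cross
    (hnc : ∀ p ∈ I, ∀ q ∈ I, ¬(p.1 < q.1 ∧ q.1 < p.2 ∧ p.2 < q.2)) :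
    ∃ f : ℤ × ℤ → Fin 3, ∀ p ∈ I, ∀ q ∈ I, p ≠ q →
      (p.2 = q.1 ∨ q.2 = p.1) → f p ≠ f q := by
  rcases I.eq_empty_or_nonempty with rfl | hne
  · exact ⟨fun _ => 0, by simp⟩
  have hFne : (I.image Prod.fst).Nonempty := hne.image _
  have hMne : (I.image Prod.snd).Nonempty := hne.image _
  set m := (I.image Prod.fst).min' hFne with hm_def
  set M := (I.image Prod.snd).max' hMne with hM_def
  have hm_min : ∀ p ∈ I, m ≤ p.1 := fun p hp =>
    Finset.min'_le _ _ (Finset.mem_image_of_mem _ hp)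
  have hMmax : ∀ p ∈ I, p.2 ≤ M := fun p hp =>
    Finset.le_max' _ _ (Finset.mem_image_of_mem _ hp)
  obtain ⟨p₀, hp₀⟩ := hne
  have hmM : m < M :=
    lt_of_le_of_lt (hm_min p₀ hp₀) (lt_of_lt_of_le (hlt p₀ hp₀) (hMmax p₀ hp₀))
  obtain ⟨g, hg, _⟩ := key I.card I le_rfl hlt hnc m M hmM
    (fun p hp => ⟨hm_min p hp, hMmax p hp⟩)
  refine ⟨fun p => g p.2, ?_⟩
  intro p hp q hq _ ht
  rcases ht with h | h
  · show g p.2 ≠ g q.2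
    rw [h]
    exact hg q hq
  · show g p.2 ≠ g q.2
    rw [h]
    exact (hg p hp).symm
end

section
/- Let G be a graph whose vertices are a finite family of pairwise non-crossing closed intervals with integer endpoints (no p1 < p2 < q1 < q2 occurs), with two intervals adjacent iff the right endpoint of one equals the left endpoint of the other. Then G has maximum clique size at most 3 and chromatic number at most 3. -/
set_option maxHeartbeats 2000000

private lemma fin3_exists_ne (x y : Fin 3) : ∃ z : Fin 3, z ≠ x ∧ z ≠ y := by
  have h : ∀ x y : Fin 3, ∃ z : Fin 3, z ≠ x ∧ z ≠ y := by decide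
  exact h x y

private lemma perm_two (x₁ x₂ y₁ y₂ : Fin 3) (hx : x₁ ≠ x₂) (hy : y₁ ≠ y₂) :
    ∃ π : Equiv.Perm (Fin 3), π x₁ = y₁ ∧ π x₂ = y₂ := by
  refine ⟨(Equiv.swap x₁ y₁).trans (Equiv.swap (Equiv.swap x₁ y₁ x₂) y₂), ?_, ?_⟩
  · have hz : (Equiv.swap x₁ y₁) x₂ ≠ y₁ := by
      intro h
      have h2 : (Equiv.swap x₁ y₁) x₂ = (Equiv.swap x₁ y₁) x₁ := by
        rw [h, Equiv.swap_apply_left]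
      exact hx ((Equiv.swap x₁ y₁).injective h2).symm
    simp only [Equiv.trans_apply, Equiv.swap_apply_left]
    exact Equiv.swap_apply_of_ne_of_ne (Ne.symm hz) hy
  · simp only [Equiv.trans_apply, Equiv.swap_apply_left]

/-- Any finite noncrossing family of integer chords admits a 3-coloring of
`ℤ` proper on all chords. -/
lemma exists_good_coloring : ∀ (n : ℕ) (I : Finset (ℤ × ℤ)),
    I.card ≤ n →
    (∀ p ∈ I, p.1 < p.2) →
    (∀ p ∈ I, ∀ q ∈ I, ¬(p.1 < q.1 ∧ q.1 < p.2 ∧ p.2 < q.2)) →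
    ∃ f : ℤ → Fin 3, ∀ p ∈ I, f p.1 ≠ f p.2 := by
  intro n
  induction n with
  | zero =>
    intro I hcard _ _
    have hI : I = ∅ := Finset.card_eq_zero.mp (Nat.le_zero.mp hcard)
    exact ⟨fun _ => 0, by simp [hI]⟩
  | succ n ih =>
    intro I hcard hlt hnc
    rcases I.eq_empty_or_nonempty with rfl | hne
    · exact ⟨fun _ => 0, by simp⟩
    have hbex : ∃ b : ℤ, (∀ p ∈ I, p.2 ≤ b) ∧ ∃ p ∈ I, p.2 = b := by
      refine ⟨(I.image Prod.snd).max' (hne.image _),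
        fun p hp => Finset.le_max' _ _ (Finset.mem_image_of_mem _ hp), ?_⟩
      have h := Finset.max'_mem _ (hne.image Prod.snd)
      rw [Finset.mem_image] at h
      obtain ⟨p, hp, hpb⟩ := h
      exact ⟨p, hp, hpb⟩
    obtain ⟨b, hble, hIbne⟩ := hbex
    have haex : ∃ a : ℤ, (a, b) ∈ I ∧ ∀ p ∈ I, p.2 = b → a ≤ p.1 := by
      have hIbfne : ((I.filter (fun p => p.2 = b)).image Prod.fst).Nonempty := by
        obtain ⟨p, hp, hpb⟩ := hIbne
        exact ⟨p.1, Finset.mem_image_of_mem _ (Finset.mem_filter.mpr ⟨hp, hpb⟩)⟩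
      refine ⟨((I.filter (fun p => p.2 = b)).image Prod.fst).min' hIbfne, ?_, ?_⟩
      · have h := Finset.min'_mem _ hIbfne
        rw [Finset.mem_image] at h
        obtain ⟨p, hp, hpa⟩ := h
        rw [Finset.mem_filter] at hp
        have hpe : p = (((I.filter (fun p => p.2 = b)).image Prod.fst).min' hIbfne, b) :=
          Prod.ext hpa hp.2
        exact hpe ▸ hp.1
      · intro p hp hpb
        exact Finset.min'_le _ _ (Finset.mem_image_of_mem _
          (Finset.mem_filter.mpr ⟨hp, hpb⟩))
    obtain ⟨a, hv, h_a_min⟩ := haex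
    have hab : a < b := hlt _ hv
    by_cases hOut : (I.filter (fun p => p.1 < a)).Nonempty
    · -- Case A : cut at the single point a
      obtain ⟨q, hq⟩ := hOut
      have hqI : q ∈ I := (Finset.mem_filter.mp hq).1
      have hq1 : q.1 < a := (Finset.mem_filter.mp hq).2
      have hincard : (I.filter (fun p => a ≤ p.1)).card ≤ n := by
        have hss : I.filter (fun p => a ≤ p.1) ⊂ I :=
          (Finset.ssubset_iff_of_subset (Finset.filter_subset _ _)).mpr
            ⟨q, hqI, by simp only [Finset.mem_filter]; exact fun h => absurd h.2 (not_le.mpr hq1)⟩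
        have := Finset.card_lt_card hss
        omega
      have houtcard : (I.filter (fun p => p.1 < a)).card ≤ n := by
        have hss : I.filter (fun p => p.1 < a) ⊂ I :=
          (Finset.ssubset_iff_of_subset (Finset.filter_subset _ _)).mpr
            ⟨(a, b), hv, by simp [Finset.mem_filter]⟩
        have := Finset.card_lt_card hss
        omega
      obtain ⟨fin, hfin⟩ := ih (I.filter (fun p => a ≤ p.1)) hincard
        (fun p hp => hlt p (Finset.filter_subset _ _ hp))
        (fun p hp q hq => hnc p (Finset.filter_subset _ _ hp) q (Finset.filter_subset _ _ hq))
      obtain ⟨fout, hfout⟩ := ih (I.filter (fun p => p.1 < a)) houtcard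
        (fun p hp => hlt p (Finset.filter_subset _ _ hp))
        (fun p hp q hq => hnc p (Finset.filter_subset _ _ hp) q (Finset.filter_subset _ _ hq))
      have hout2 : ∀ p ∈ I, p.1 < a → p.2 ≤ a := by
        intro p hp hp1
        by_contra hcon
        push_neg at hcon
        have h2b : p.2 ≤ b := hble p hp
        rcases lt_or_eq_of_le h2b with h | h
        · exact hnc p hp (a, b) hv ⟨hp1, hcon, h⟩
        · exact absurd (h_a_min p hp h) (not_le.mpr hp1)
      set π := Equiv.swap (fin a) (fout a) with hπdef
      refine ⟨fun x => if a ≤ x then π (fin x) else fout x, ?_⟩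
      intro p hp
      by_cases hp1 : a ≤ p.1
      · have hp2 : a ≤ p.2 := le_of_lt (lt_of_le_of_lt hp1 (hlt p hp))
        simp only [if_pos hp1, if_pos hp2]
        exact fun h => hfin p (Finset.mem_filter.mpr ⟨hp, hp1⟩) (π.injective h)
      · push_neg at hp1
        have hpmem : p ∈ I.filter (fun p => p.1 < a) := Finset.mem_filter.mpr ⟨hp, hp1⟩
        have hp2 : p.2 ≤ a := hout2 p hp hp1
        simp only [if_neg (not_le.mpr hp1)]
        rcases lt_or_eq_of_le hp2 with h | h
        · simp only [if_neg (not_le.mpr h)]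
          exact hfout p hpmem
        · rw [h]
          simp only [if_pos (le_refl a), hπdef, Equiv.swap_apply_left]
          have := hfout p hpmem
          rw [h] at this
          exact this
    · -- Case B : every chord has left endpoint ≥ a
      have hallge : ∀ p ∈ I, a ≤ p.1 := by
        intro p hp
        by_contra hcon
        exact hOut ⟨p, Finset.mem_filter.mpr ⟨hp, not_le.mp hcon⟩⟩
      by_cases hB : ((I.filter (fun p => p.2 = b)).erase (a, b)).Nonempty
      · -- Case B1 : b has a second ender; cut at a' and b
        have ha'ex : ∃ a' : ℤ, ((a', b) ∈ I ∧ (a', b) ≠ (a, b)) ∧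
            ∀ p ∈ I, p.2 = b → p ≠ (a, b) → a' ≤ p.1 := by
          have hJfne : (((I.filter (fun p => p.2 = b)).erase (a, b)).image Prod.fst).Nonempty :=
            hB.image _
          refine ⟨(((I.filter (fun p => p.2 = b)).erase (a, b)).image Prod.fst).min' hJfne,
            ?_, ?_⟩
          · have h := Finset.min'_mem _ hJfne
            rw [Finset.mem_image] at h
            obtain ⟨p, hp, hpa⟩ := h
            rw [Finset.mem_erase, Finset.mem_filter] at hp
            have hpe : p = (_, b) := Prod.ext hpa hp.2.2
            exact ⟨hpe ▸ hp.2.1, hpe ▸ hp.1⟩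
          · intro p hp hpb hpne
            exact Finset.min'_le _ _ (Finset.mem_image_of_mem _
              (Finset.mem_erase.mpr ⟨hpne, Finset.mem_filter.mpr ⟨hp, hpb⟩⟩))
        obtain ⟨a', hv', h_a'_min⟩ := ha'ex
        have haa' : a < a' := by
          have h1 : a ≤ a' := hallge _ hv'.1
          rcases lt_or_eq_of_le h1 with h | h
          · exact h
          · have he : (a', b) = (a, b) := by rw [h]
            exact absurd he hv'.2
        have ha'b : a' < b := hlt _ hv'.1
        have hincard : (I.filter (fun p => a' ≤ p.1)).card ≤ n := by
          have hss : I.filter (fun p => a' ≤ p.1) ⊂ I :=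
            (Finset.ssubset_iff_of_subset (Finset.filter_subset _ _)).mpr
              ⟨(a, b), hv, by
                simp only [Finset.mem_filter, not_and]
                exact fun _ => not_le.mpr haa'⟩
          have := Finset.card_lt_card hss
          omega
        have houtcard : (I.filter (fun p => p.1 < a')).card ≤ n := by
          have hss : I.filter (fun p => p.1 < a') ⊂ I :=
            (Finset.ssubset_iff_of_subset (Finset.filter_subset _ _)).mpr
              ⟨(a', b), hv'.1, by
                simp only [Finset.mem_filter, not_and]
                exact fun _ => lt_irrefl a'⟩
          have := Finset.card_lt_card hss
          omega
        obtain ⟨fin, hfin⟩ := ih (I.filter (fun p => a' ≤ p.1)) hincard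
          (fun p hp => hlt p (Finset.filter_subset _ _ hp))
          (fun p hp q hq => hnc p (Finset.filter_subset _ _ hp) q (Finset.filter_subset _ _ hq))
        obtain ⟨fout, hfout⟩ := ih (I.filter (fun p => p.1 < a')) houtcard
          (fun p hp => hlt p (Finset.filter_subset _ _ hp))
          (fun p hp q hq => hnc p (Finset.filter_subset _ _ hp) q (Finset.filter_subset _ _ hq))
        have hkey : ∀ p ∈ I, p.1 < a' → p ≠ (a, b) → p.2 ≤ a' := by
          intro p hp hp1 hpne
          by_contra hcon
          push_neg at hcon
          have h2b : p.2 ≤ b := hble p hp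
          rcases lt_or_eq_of_le h2b with h | h
          · exact hnc p hp (a', b) hv'.1 ⟨hp1, hcon, h⟩
          · exact absurd (h_a'_min p hp h hpne) (not_le.mpr hp1)
        obtain ⟨c0, hc0a, hc0a'⟩ := fin3_exists_ne (fout a) (fout a')
        set g := Function.update fout b c0 with hgdef
        have hga : g a = fout a := Function.update_of_ne (ne_of_lt hab) _ _
        have hga' : g a' = fout a' := Function.update_of_ne (ne_of_lt ha'b) _ _
        have hgb : g b = c0 := Function.update_self _ _ _
        have hgout : ∀ p ∈ I, p.1 < a' → g p.1 ≠ g p.2 := by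
          intro p hp hp1
          have hpmem : p ∈ I.filter (fun p => p.1 < a') := Finset.mem_filter.mpr ⟨hp, hp1⟩
          have hp1b : p.1 ≠ b := ne_of_lt (lt_trans hp1 ha'b)
          by_cases hpv : p = (a, b)
          · rw [hpv]
            show g a ≠ g b
            rw [hga, hgb]
            exact fun h => hc0a h.symm
          · have hp2 : p.2 ≤ a' := hkey p hp hp1 hpv
            have hp2b : p.2 ≠ b := ne_of_lt (lt_of_le_of_lt hp2 ha'b)
            rw [hgdef]
            rw [Function.update_of_ne hp1b, Function.update_of_ne hp2b]
            exact hfout p hpmem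
        have h12 : fin a' ≠ fin b := by
          have := hfin (a', b) (Finset.mem_filter.mpr ⟨hv'.1, le_refl a'⟩)
          exact this
        have h34 : g a' ≠ g b := by
          rw [hga', hgb]
          exact fun h => hc0a' h.symm
        obtain ⟨π, hπ1, hπ2⟩ := perm_two (fin a') (fin b) (g a') (g b) h12 h34
        refine ⟨fun x => if a' ≤ x then π (fin x) else g x, ?_⟩
        intro p hp
        by_cases hp1 : a' ≤ p.1
        · have hp2 : a' ≤ p.2 := le_of_lt (lt_of_le_of_lt hp1 (hlt p hp))
          simp only [if_pos hp1, if_pos hp2]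
          exact fun h => hfin p (Finset.mem_filter.mpr ⟨hp, hp1⟩) (π.injective h)
        · push_neg at hp1
          simp only [if_neg (not_le.mpr hp1)]
          by_cases hpv : p = (a, b)
          · have hgoal := hgout p hp hp1
            rw [hpv]
            show g a ≠ (if a' ≤ b then π (fin b) else g b)
            rw [if_pos (le_of_lt ha'b), hπ2]
            rw [hpv] at hgoal
            exact hgoal
          · have hp2 : p.2 ≤ a' := hkey p hp hp1 hpv
            rcases lt_or_eq_of_le hp2 with h | h
            · simp only [if_neg (not_le.mpr h)]
              exact hgout p hp hp1
            · rw [h]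
              simp only [if_pos (le_refl a'), hπ1]
              have := hgout p hp hp1
              rw [h] at this
              exact this
      · -- Case B0 : (a,b) is the only chord ending at b
        have hcard' : (I.erase (a, b)).card ≤ n := by
          have := Finset.card_erase_of_mem hv
          omega
        obtain ⟨f', hf'⟩ := ih (I.erase (a, b)) hcard'
          (fun p hp => hlt p (Finset.erase_subset _ _ hp))
          (fun p hp q hq => hnc p (Finset.erase_subset _ _ hp) q (Finset.erase_subset _ _ hq))
        obtain ⟨c0, hc0, -⟩ := fin3_exists_ne (f' a) (f' a)
        refine ⟨fun x => if x = b then c0 else f' x, ?_⟩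
        intro p hp
        by_cases hpv : p = (a, b)
        · rw [hpv]
          show (if a = b then c0 else f' a) ≠ (if b = b then c0 else f' b)
          rw [if_neg (ne_of_lt hab), if_pos rfl]
          exact fun h => hc0 h.symm
        · have hpI' : p ∈ I.erase (a, b) := Finset.mem_erase.mpr ⟨hpv, hp⟩
          have hp2b : p.2 ≠ b := by
            intro h
            exact hB ⟨p, Finset.mem_erase.mpr ⟨hpv, Finset.mem_filter.mpr ⟨hp, h⟩⟩⟩
          have hp1b : p.1 ≠ b := by
            intro h
            have := hble p hp
            have := hlt p hp
            omega
          show (if p.1 = b then c0 else f' p.1) ≠ (if p.2 = b then c0 else f' p.2)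
          rw [if_neg hp1b, if_neg hp2b]
          exact hf' p hpI'

/-- the "touching" graph of a finite family of pairwise
non-crossing closed integer intervals has clique number at most 3 and
chromatic number at most 3. -/
theorem stmt2 (I : Finset (ℤ × ℤ))
    (hlt : ∀ p ∈ I, p.1 < p.2)
    -- no two intervals properly cross
    (hnc : ∀ p ∈ I, ∀ q ∈ I, ¬(p.1 < q.1 ∧ q.1 < p.2 ∧ p.2 < q.2)) :
    (SimpleGraph.fromRel (fun p q : {p : ℤ × ℤ // p ∈ I} =>
        (p.1.2 = q.1.1 ∨ q.1.2 = p.1.1))).CliqueFree 4 ∧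
    (SimpleGraph.fromRel (fun p q : {p : ℤ × ℤ // p ∈ I} =>
        (p.1.2 = q.1.1 ∨ q.1.2 = p.1.1))).Colorable 3 := by
  constructor
  · have h3 : (SimpleGraph.fromRel (fun p q : {p : ℤ × ℤ // p ∈ I} =>
        (p.1.2 = q.1.1 ∨ q.1.2 = p.1.1))).CliqueFree 3 := by
      intro t ht
      obtain ⟨x, y, z, hxy, hxz, hyz, hteq⟩ := Finset.card_eq_three.mp ht.2
      have hadj := ht.1
      have hxyA := hadj (by simp [hteq]) (by simp [hteq]) hxy
      have hxzA := hadj (by simp [hteq]) (by simp [hteq]) hxz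
      have hyzA := hadj (by simp [hteq]) (by simp [hteq]) hyz
      rw [SimpleGraph.fromRel_adj] at hxyA hxzA hyzA
      have hx := hlt _ x.2
      have hy := hlt _ y.2
      have hz := hlt _ z.2
      obtain ⟨-, h1⟩ := hxyA
      obtain ⟨-, h2⟩ := hxzA
      obtain ⟨-, h3⟩ := hyzA
      rcases h1 with (h1 | h1) | (h1 | h1) <;> rcases h2 with (h2 | h2) | (h2 | h2) <;>
        rcases h3 with (h3 | h3) | (h3 | h3) <;> omega
    exact h3.mono (by norm_num)
  · obtain ⟨f, hf⟩ := exists_good_coloring I.card I le_rfl hlt hnc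
    refine ⟨SimpleGraph.Coloring.mk (fun v => f v.1.2) ?_⟩
    intro u v huv
    rw [SimpleGraph.fromRel_adj] at huv
    obtain ⟨hne, h⟩ := huv
    rcases h with (h | h) | (h | h)
    · rw [h]; exact hf _ v.2
    · rw [h]; exact (hf _ u.2).symm
    · rw [h]; exact (hf _ u.2).symm
    · rw [h]; exact hf _ v.2
end
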